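/- Let N₁ and N₂ be symmetric real n × n matrices, each of whose entries satisfy N(i,i) + N(j,j) > 2·N(i,j) for all indices i ≠ j. If N₂ = P N₁ for some n × n permutation matrix P, then N₁ = N₂. -/

import Mathlib

open Matrix

/-- The permutation matrix of a permutation `σ`. -/
def permMatrix {n : ℕ} (σ : Equiv.Perm (Fin n)) : Matrix (Fin n) (Fin n) ℝ :=
  Matrix.of fun i j => if σ i = j then 1 else 0

lemma permMatrix_mul_apply {n : ℕ} (σ : Equiv.Perm (Fin n))
    (A : Matrix (Fin n) (Fin n) ℝ) (i j : Fin n) :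
    (permMatrix σ * A) i j = A (σ i) j := by
  simp [Matrix.mul_apply, permMatrix, ite_mul]

lemma key_sum {n : ℕ} (A B : Matrix (Fin n) (Fin n) ℝ)
    (hiA : ∀ i j, i ≠ j → 2 * A i j < A i i + A j j)
    (τ : Equiv.Perm (Fin n)) (hτ : ∀ i, B i i = A (τ i) i)
    (hne : (Finset.univ.filter (fun i => τ i ≠ i)).Nonempty) :
    ∑ i ∈ Finset.univ.filter (fun i => τ i ≠ i), B i i <
      ∑ i ∈ Finset.univ.filter (fun i => τ i ≠ i), A i i := by
  set T := Finset.univ.filter (fun i => τ i ≠ i) with hT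
  have hreindex : ∑ i ∈ T, A (τ i) (τ i) = ∑ i ∈ T, A i i := by
    apply Equiv.Perm.sum_comp τ T (fun i => A i i)
    intro x hx
    simp only [hT, Finset.coe_filter, Set.mem_setOf_eq] at hx ⊢
    simp [hx]
  have hlt : ∑ i ∈ T, (2 * B i i) < ∑ i ∈ T, (A (τ i) (τ i) + A i i) := by
    apply Finset.sum_lt_sum_of_nonempty hne
    intro i hi
    have hne' : τ i ≠ i := by simpa [hT] using hi
    rw [hτ i]
    exact hiA (τ i) i hne'
  rw [Finset.sum_add_distrib, hreindex, ← Finset.mul_sum] at hlt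
  linarith

/-- If `N₁` and `N₂` are symmetric matrices whose entries satisfy the strict
inequalities `N(i,i) + N(j,j) > 2·N(i,j)` for `i ≠ j`, and `N₂` is a row
permutation of `N₁`, then `N₁ = N₂`. -/
theorem symmetric_perm_eq {n : ℕ} (N₁ N₂ : Matrix (Fin n) (Fin n) ℝ)
    (hsym₁ : N₁.IsSymm) (hsym₂ : N₂.IsSymm)
    (hineq₁ : ∀ i j, i ≠ j → 2 * N₁ i j < N₁ i i + N₁ j j)
    (hineq₂ : ∀ i j, i ≠ j → 2 * N₂ i j < N₂ i i + N₂ j j)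
    (σ : Equiv.Perm (Fin n)) (hperm : N₂ = permMatrix σ * N₁) :
    N₁ = N₂ := by
  have hN₂ : ∀ i j, N₂ i j = N₁ (σ i) j := by
    intro i j; rw [hperm, permMatrix_mul_apply]
  have hfix : ∀ i, σ i = i := by
    by_contra h
    push_neg at h
    obtain ⟨i₀, hi₀⟩ := h
    have hne : (Finset.univ.filter (fun i => σ i ≠ i)).Nonempty :=
      ⟨i₀, by simp [hi₀]⟩
    have hne' : (Finset.univ.filter (fun i => σ⁻¹ i ≠ i)).Nonempty :=
      ⟨i₀, by simp; intro hc; exact hi₀ (by conv_lhs => rw [← hc, Equiv.apply_symm_apply])⟩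
    have hsame : (Finset.univ.filter (fun i => σ⁻¹ i ≠ i)) =
        (Finset.univ.filter (fun i => σ i ≠ i)) := by
      apply Finset.filter_congr
      intro x _
      simp only [ne_eq, eq_iff_iff, not_iff_not]
      constructor
      · intro hx; conv_lhs => rw [← hx, (fun y => by simp : ∀ y, σ (σ⁻¹ y) = y)]
      · intro hx; conv_lhs => rw [← hx, (fun y => by simp : ∀ y, σ⁻¹ (σ y) = y)]
    have h1 := key_sum N₁ N₂ hineq₁ σ (fun i => hN₂ i i) hne
    have h2 := key_sum N₂ N₁ hineq₂ σ⁻¹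
      (fun i => by rw [hN₂ (σ⁻¹ i) i, (fun y => by simp : ∀ y, σ (σ⁻¹ y) = y)]) hne'
    rw [hsame] at h2
    linarith
  ext i j
  rw [hN₂ i j, hfix i]
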